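/- Let m ≥ 1 and let G = C₆ᵐ × C₂ be the direct product of m copies of the cyclic group of order 6 (with generators a₁,…,a_m) and a cyclic group of order 2 (with generator h). In 𝔽₂[G], let u_m = ∏_{i=1}^{m} (a_i + a_i² + a_i³ + a_i⁴ + a_i⁵) and u = 1 + h·u_m. Then the minimum distance of the code generated by u equals 2^{m+1}. -/

import Mathlib

noncomputable section
set_option linter.unusedSectionVars false
set_option linter.unusedVariables false

open MonoidAlgebra

/-- The code generated by `u` in a group algebra: the `R`-span of `{g • u : g ∈ G}`. -/
def codeGen {R : Type*} [CommSemiring R] {G : Type*} [Monoid G]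
    (u : MonoidAlgebra R G) : Submodule R (MonoidAlgebra R G) :=
  Submodule.span R (Set.range fun g : G => MonoidAlgebra.of R G g * u)

/-- The weight (support size) of an element of a group algebra. -/
def wt {R : Type*} [Semiring R] {G : Type*} (x : MonoidAlgebra R G) : ℕ :=
  x.coeff.support.card

/-- The minimum distance of the code generated by `u`: the least weight of a nonzero
element of the code. -/
def minDist {R : Type*} [CommSemiring R] {G : Type*} [Monoid G]
    (u : MonoidAlgebra R G) : ℕ :=
  sInf {n | ∃ x ∈ codeGen u, x ≠ 0 ∧ wt x = n}

/-- The group `C₆ᵐ × C₂`, written multiplicatively. -/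
abbrev Gp (m : ℕ) : Type := Multiplicative ((Fin m → ZMod 6) × ZMod 2)

/-- The generator `aᵢ` of the `i`-th copy of `C₆`. -/
def agen (m : ℕ) (i : Fin m) : Gp m := Multiplicative.ofAdd (Pi.single i 1, 0)

/-- The generator `h` of the `C₂` factor. -/
def hgen (m : ℕ) : Gp m := Multiplicative.ofAdd (0, 1)

/-- `u_m = ∏ᵢ (aᵢ + aᵢ² + aᵢ³ + aᵢ⁴ + aᵢ⁵)` in `𝔽₂[C₆ᵐ × C₂]`. -/
def um (m : ℕ) : MonoidAlgebra (ZMod 2) (Gp m) :=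
  ∏ i : Fin m,
    (of (ZMod 2) (Gp m) (agen m i) + of (ZMod 2) (Gp m) (agen m i) ^ 2 +
      of (ZMod 2) (Gp m) (agen m i) ^ 3 + of (ZMod 2) (Gp m) (agen m i) ^ 4 +
      of (ZMod 2) (Gp m) (agen m i) ^ 5)

/-- `u = 1 + h·u_m`. -/
def uu (m : ℕ) : MonoidAlgebra (ZMod 2) (Gp m) :=
  1 + of (ZMod 2) (Gp m) (hgen m) * um m

section Machinery

variable {A Z : Type*} [AddCommGroup A] [DecidableEq A] [AddCommGroup Z] [DecidableEq Z]

abbrev R2 (A : Type*) [AddCommGroup A] := MonoidAlgebra (ZMod 2) (Multiplicative A)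

def ofA (x : A) : R2 A := MonoidAlgebra.single (Multiplicative.ofAdd x) 1

lemma ofA_mul (x y : A) : (ofA x) * (ofA y) = ofA (x + y) := by
  simp [ofA, MonoidAlgebra.single_mul_single]

lemma ofA_zero : (ofA (0 : A)) = 1 := rfl

lemma mul_ofA_apply (f : R2 A) (t : A) (g : Multiplicative A) :
    (f * ofA t).coeff g = f.coeff (g * (Multiplicative.ofAdd t)⁻¹) := by
  rw [ofA, MonoidAlgebra.coeff_mul_single_apply, mul_one]

variable (c : A →+ Z) (e : Z →+ A)

def filt (j : Z) (f : R2 A) : R2 A :=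
  MonoidAlgebra.ofCoeff (Finsupp.filter (fun g : Multiplicative A => c g.toAdd = j) f.coeff)

def comp (j : Z) (f : R2 A) : R2 A := filt c j f * ofA (-(e j))

lemma filt_apply (j : Z) (f : R2 A) (g : Multiplicative A) :
    (filt c j f).coeff g = if c g.toAdd = j then f.coeff g else 0 := by
  simp [filt, MonoidAlgebra.coeff_ofCoeff, Finsupp.filter_apply]

lemma comp_apply (j : Z) (f : R2 A) (g : Multiplicative A) :
    (comp c e j f).coeff g
      = if c (g.toAdd + e j) = j then f.coeff (g * Multiplicative.ofAdd (e j)) else 0 := by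
  rw [comp, mul_ofA_apply]
  have harg : g * (Multiplicative.ofAdd (-(e j)))⁻¹ = g * Multiplicative.ofAdd (e j) := by
    simp
  rw [harg, filt_apply]
  congr 1

lemma comp_zero_elt (j : Z) : comp c e j (0 : R2 A) = 0 := by
  ext g; rw [comp_apply]; simp

lemma comp_add (j : Z) (f f' : R2 A) : comp c e j (f + f') = comp c e j f + comp c e j f' := by
  ext g
  rw [MonoidAlgebra.coeff_add, Finsupp.add_apply, comp_apply, comp_apply, comp_apply]
  split
  · rw [MonoidAlgebra.coeff_add]; exact Finsupp.add_apply _ _ _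
  · simp

lemma comp_sum {ι : Type*} (j : Z) (s : Finset ι) (f : ι → R2 A) :
    comp c e j (∑ i ∈ s, f i) = ∑ i ∈ s, comp c e j (f i) := by
  classical
  induction s using Finset.induction_on with
  | empty => simpa using comp_zero_elt c e j
  | @insert _ _ hx ih =>
    rw [Finset.sum_insert hx, Finset.sum_insert hx, comp_add, ih]

/-- `f` is supported on the kernel of coordinate `c`. -/
def Off (w : R2 A) : Prop := ∀ g ∈ w.coeff.support, c (Multiplicative.toAdd g) = 0

lemma Off_apply {w : R2 A} (hw : Off c w) {g : Multiplicative A} (hg : c g.toAdd ≠ 0) :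
    w.coeff g = 0 := by
  by_contra h
  exact hg (hw g (Finsupp.mem_support_iff.mpr h))

lemma Off_zero : Off c (0 : R2 A) := by intro g hg; simp at hg

lemma Off_one : Off c (1 : R2 A) := by
  intro g hg
  have : g ∈ (MonoidAlgebra.single (1 : Multiplicative A) (1 : ZMod 2)).coeff.support := hg
  rw [MonoidAlgebra.coeff_single, Finsupp.support_single_ne_zero _ one_ne_zero] at this
  simp only [Finset.mem_singleton] at this
  subst this
  simp

lemma Off_add {w w' : R2 A} (h : Off c w) (h' : Off c w') : Off c (w + w') := by
  intro g hg
  rcases Finset.mem_union.mp (Finsupp.support_add (g₁ := w.coeff) (g₂ := w'.coeff) hg) with h1 | h1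
  · exact h g h1
  · exact h' g h1

lemma Off_sum {ι : Type*} (s : Finset ι) (f : ι → R2 A) (h : ∀ i ∈ s, Off c (f i)) :
    Off c (∑ i ∈ s, f i) := by
  classical
  induction s using Finset.induction_on with
  | empty => simpa using Off_zero c
  | @insert a s' hx ih =>
    rw [Finset.sum_insert hx]
    exact Off_add c (h a (Finset.mem_insert_self a s'))
      (ih (fun i hi => h i (Finset.mem_insert_of_mem hi)))

lemma Off_mul {w w' : R2 A} (h : Off c w) (h' : Off c w') : Off c (w * w') := by
  intro g hg
  have := MonoidAlgebra.support_coeff_mul_subset w w' hg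
  obtain ⟨a, ha, b, hb, rfl⟩ := Finset.mem_mul.mp this
  have h2 : Multiplicative.toAdd (a * b) = a.toAdd + b.toAdd := rfl
  rw [h2, map_add, h a ha, h' b hb, add_zero]

lemma Off_ofA_ker {t : A} (ht : c t = 0) : Off c (ofA t) := by
  intro g hg
  have : g ∈ (MonoidAlgebra.single (Multiplicative.ofAdd t) (1 : ZMod 2)).coeff.support := hg
  rw [MonoidAlgebra.coeff_single, Finsupp.support_single_ne_zero _ one_ne_zero] at this
  simp only [Finset.mem_singleton] at this
  subst this
  exact ht

lemma Off_comp (hce : ∀ z, c (e z) = z) (j : Z) (f : R2 A) : Off c (comp c e j f) := by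
  intro g hg
  rw [Finsupp.mem_support_iff, comp_apply] at hg
  by_cases hc : c (g.toAdd + e j) = j
  · rw [map_add, hce] at hc
    exact add_eq_right.mp hc
  · rw [if_neg hc] at hg; exact absurd rfl hg


lemma mem_support_comp (hce : ∀ z, c (e z) = z) (j : Z) (f : R2 A) (g : Multiplicative A)
    (hg : g ∈ (comp c e j f).coeff.support) :
    (g * Multiplicative.ofAdd (e j)) ∈ f.coeff.support ∧ c g.toAdd = 0 := by
  rw [Finsupp.mem_support_iff, comp_apply] at hg
  by_cases hc : c (g.toAdd + e j) = j
  · rw [if_pos hc] at hg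
    refine ⟨Finsupp.mem_support_iff.mpr hg, ?_⟩
    rw [map_add, hce] at hc
    exact add_eq_right.mp hc
  · rw [if_neg hc] at hg; exact absurd rfl hg

lemma comp_mul_e (hce : ∀ z, c (e z) = z) (j k : Z) (f : R2 A) :
    comp c e j (f * ofA (e k)) = comp c e (j - k) f := by
  ext g
  rw [comp_apply, comp_apply, mul_ofA_apply]
  have harg : g * Multiplicative.ofAdd (e j) * (Multiplicative.ofAdd (e k))⁻¹
      = g * Multiplicative.ofAdd (e (j - k)) := by
    rw [map_sub, mul_assoc]
    congr 1
    rw [sub_eq_add_neg, ofAdd_add, ofAdd_neg]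
  by_cases h0 : c g.toAdd = 0
  · rw [if_pos (by rw [map_add, hce, h0, zero_add]),
      if_pos (by rw [map_add, hce, h0, zero_add]), harg]
  · rw [if_neg (by rw [map_add, hce]; intro h; exact h0 (add_eq_right.mp h)),
      if_neg (by rw [map_add, hce]; intro h; exact h0 (add_eq_right.mp h))]

lemma comp_mul_single (hce : ∀ z, c (e z) = z) (j : Z) (t : Multiplicative A)
    (ht : c t.toAdd = 0) (r : ZMod 2) (f : R2 A) :
    comp c e j (f * MonoidAlgebra.single t r) = comp c e j f * MonoidAlgebra.single t r := by
  ext g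
  rw [MonoidAlgebra.coeff_mul_single_apply, comp_apply, comp_apply, MonoidAlgebra.coeff_mul_single_apply]
  have hta : (Multiplicative.toAdd (g * t⁻¹)) = g.toAdd - t.toAdd := by
    rw [toAdd_mul, toAdd_inv, sub_eq_add_neg]
  by_cases h0 : c g.toAdd = 0
  · rw [if_pos (by rw [map_add, hce, h0, zero_add]),
      if_pos (by rw [hta, map_add, map_sub, hce, h0, ht, sub_zero, zero_add]),
      mul_right_comm]
  · rw [if_neg (by rw [map_add, hce]; intro h; exact h0 (add_eq_right.mp h)),
      if_neg (by
        rw [hta, map_add, map_sub, hce, ht, sub_zero]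
        intro h; exact h0 (add_eq_right.mp h)), zero_mul]

lemma comp_mul_off (hce : ∀ z, c (e z) = z) (j : Z) (f w : R2 A) (hw : Off c w) :
    comp c e j (f * w) = comp c e j f * w := by
  classical
  have hw' : w = ∑ t ∈ w.coeff.support, MonoidAlgebra.single t (w.coeff t) := by
    conv_lhs => rw [← MonoidAlgebra.sum_coeff_single w]
    rfl
  rw [hw', Finset.mul_sum, comp_sum, Finset.mul_sum]
  refine Finset.sum_congr rfl (fun t htsupp => ?_)
  exact comp_mul_single c e hce j t (hw t htsupp) (w.coeff t) f

lemma comp_off_self (hce : ∀ z, c (e z) = z) {w : R2 A} (hw : Off c w) :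
    comp c e 0 w = w := by
  ext g
  rw [comp_apply, map_zero]
  by_cases h0 : c g.toAdd = 0
  · rw [if_pos (by rw [add_zero, h0])]
    congr 1
    simp
  · rw [if_neg (by rw [add_zero]; exact h0)]
    exact (Off_apply c hw h0).symm

lemma comp_off_ne (hce : ∀ z, c (e z) = z) {w : R2 A} (hw : Off c w) {j : Z} (hj : j ≠ 0) :
    comp c e j w = 0 := by
  ext g
  rw [comp_apply]
  by_cases hc : c (g.toAdd + e j) = j
  · rw [if_pos hc]
    rw [map_add, hce] at hc
    have h0 : c g.toAdd = 0 := add_eq_right.mp hc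
    have : c (Multiplicative.toAdd (g * Multiplicative.ofAdd (e j))) = j := by
      have : (Multiplicative.toAdd (g * Multiplicative.ofAdd (e j))) = g.toAdd + e j := rfl
      rw [this, map_add, hce, h0, zero_add]
    rw [Off_apply c hw (by rw [this]; exact hj)]
    rfl
  · rw [if_neg hc]; rfl

variable [Fintype Z]

/-- sum of all `ofA (e k)`. -/
def sig : R2 A := ∑ k : Z, ofA (e k)

lemma comp_mul_sig (hce : ∀ z, c (e z) = z) (j : Z) (f : R2 A) :
    comp c e j (f * sig e) = ∑ k : Z, comp c e k f := by
  rw [sig, Finset.mul_sum, comp_sum]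
  rw [Finset.sum_congr rfl (fun k _ => comp_mul_e c e hce j k f)]
  exact Fintype.sum_equiv (Equiv.subLeft j) _ _ (fun k => rfl)

lemma sum_filt (f : R2 A) : (∑ j : Z, filt c j f) = f := by
  ext g
  rw [MonoidAlgebra.coeff_sum, Finset.sum_apply']
  simp only [filt_apply]
  rw [Finset.sum_ite_eq (Finset.univ : Finset Z) (c g.toAdd) (fun _ => f.coeff g)]
  simp

lemma comp_mul_ofA_e (j : Z) (f : R2 A) : comp c e j f * ofA (e j) = filt c j f := by
  rw [comp, mul_assoc, ofA_mul, neg_add_cancel, ofA_zero, mul_one]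

lemma sum_comp (f : R2 A) : (∑ j : Z, comp c e j f * ofA (e j)) = f := by
  rw [Finset.sum_congr rfl (fun j _ => comp_mul_ofA_e c e j f)]
  exact sum_filt c f

lemma wt_sum_filt (f : R2 A) : (∑ j : Z, wt (filt c j f)) = wt f := by
  classical
  have hsupp : ∀ j, (filt c j f).coeff.support = f.coeff.support.filter (fun g => c g.toAdd = j) := by
    intro j
    ext g
    simp [filt, MonoidAlgebra.coeff_ofCoeff, Finsupp.support_filter, Finset.mem_filter, Finsupp.mem_support_iff, and_comm]
  simp only [wt, hsupp]
  rw [← Finset.card_eq_sum_card_fiberwise (f := fun g => c (Multiplicative.toAdd g))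
    (s := f.coeff.support) (t := Finset.univ)]
  intro x _; exact Finset.mem_univ _

lemma wt_mul_ofA (f : R2 A) (t : A) : wt (f * ofA t) = wt f := by
  have hsupp : (f * ofA t).coeff.support
      = f.coeff.support.map (Equiv.toEmbedding (Equiv.mulRight (Multiplicative.ofAdd t))) := by
    ext g
    simp only [Finsupp.mem_support_iff, mul_ofA_apply, Finset.mem_map, Equiv.coe_toEmbedding,
      Equiv.coe_mulRight]
    constructor
    · intro h
      exact ⟨g * (Multiplicative.ofAdd t)⁻¹, h, by group⟩
    · rintro ⟨a, ha, rfl⟩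
      simpa using ha
  rw [wt, wt, hsupp, Finset.card_map]

lemma wt_comp (j : Z) (f : R2 A) : wt (comp c e j f) = wt (filt c j f) := by
  rw [comp, wt_mul_ofA]

lemma wt_sum_comp (f : R2 A) : (∑ j : Z, wt (comp c e j f)) = wt f := by
  rw [Finset.sum_congr rfl (fun j _ => wt_comp c e j f)]
  exact wt_sum_filt c f


lemma addSelf (x : R2 A) : x + x = 0 := by
  have h2 : (2 : ZMod 2) = 0 := by decide
  calc x + x = (2 : ZMod 2) • x := by rw [two_smul]
  _ = 0 := by rw [h2, zero_smul]

lemma even_smul_zero (k : ℕ) (x : R2 A) : (2 * k) • x = 0 := by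
  rw [mul_comm, mul_smul]
  have : (2 : ℕ) • x = 0 := by rw [two_smul]; exact addSelf x
  rw [this, smul_zero]

lemma eq_of_add_eq_zero {x y : R2 A} (h : x + y = 0) : x = y := by
  calc x = x + (y + y) := by rw [addSelf, add_zero]
  _ = (x + y) + y := by ring
  _ = y := by rw [h, zero_add]

lemma wt_eq_zero_iff (f : R2 A) : wt f = 0 ↔ f = 0 := by
  simp [wt, Finset.card_eq_zero]

lemma one_le_wt {f : R2 A} (h : f ≠ 0) : 1 ≤ wt f := by
  rcases Nat.eq_zero_or_pos (wt f) with h0 | h1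
  · exact absurd ((wt_eq_zero_iff f).mp h0) h
  · exact h1

lemma wt_add_le (f g : R2 A) : wt (f + g) ≤ wt f + wt g := by
  classical
  refine le_trans (Finset.card_le_card (Finsupp.support_add (g₁ := f.coeff) (g₂ := g.coeff))) ?_
  exact Finset.card_union_le _ _

lemma wt_sum_le {ι : Type*} (s : Finset ι) (f : ι → R2 A) :
    wt (∑ i ∈ s, f i) ≤ ∑ i ∈ s, wt (f i) := by
  classical
  induction s using Finset.induction_on with
  | empty => simp [wt]
  | @insert a s' hx ih =>
    rw [Finset.sum_insert hx, Finset.sum_insert hx]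
    exact le_trans (wt_add_le _ _) (Nat.add_le_add_left ih _)

lemma diag_sum_le {ι : Type*} (s : Finset ι) (x y : ι → ℕ) :
    (∑ i ∈ s, x i * y i) ≤ (∑ i ∈ s, x i) * (∑ i ∈ s, y i) := by
  classical
  rw [Finset.sum_mul]
  refine Finset.sum_le_sum (fun i hi => ?_)
  exact Nat.mul_le_mul_left _ (Finset.single_le_sum (fun j _ => Nat.zero_le (y j)) hi)

lemma wt_add_of_disjoint {f g : R2 A} (h : Disjoint f.coeff.support g.coeff.support) :
    wt (f + g) = wt f + wt g := by
  classical
  rw [wt, wt, wt, MonoidAlgebra.coeff_add, Finsupp.support_add_eq h]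
  exact Finset.card_union_of_disjoint h

end Machinery

lemma sqrt_trick {u v K : ℕ} (h : K * K ≤ u * v) : 2 * K ≤ u + v := by
  nlinarith [sq_nonneg (u - (v:ℤ)), sq_nonneg ((u:ℤ) + v)]

lemma cs_nat {ι : Type*} (s : Finset ι) (x y : ι → ℕ) (C : ℕ)
    (h : ∀ i ∈ s, C ≤ x i * y i) :
    s.card * s.card * C ≤ (∑ i ∈ s, x i) * (∑ i ∈ s, y i) := by
  classical
  induction s using Finset.induction_on with
  | empty => simp
  | @insert a s' hx ih =>
    have hC : C ≤ x a * y a := h a (Finset.mem_insert_self a s')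
    have ih' := ih (fun i hi => h i (Finset.mem_insert_of_mem hi))
    rw [Finset.sum_insert hx, Finset.sum_insert hx, Finset.card_insert_of_notMem hx]
    set X := ∑ i ∈ s', x i
    set Y := ∑ i ∈ s', y i
    set n := s'.card
    have hcross : 2 * (n * C) ≤ x a * Y + X * y a := by
      apply sqrt_trick
      calc (n*C) * (n*C) = (n*n*C)*C := by ring
      _ ≤ (X*Y)*(x a*y a) := Nat.mul_le_mul ih' hC
      _ = (x a*Y)*(X*y a) := by ring
    calc (n+1)*(n+1)*C = n*n*C + 2*(n*C) + C := by ring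
    _ ≤ X*Y + (x a*Y + X*y a) + x a*y a := by
        exact Nat.add_le_add (Nat.add_le_add ih' hcross) hC
    _ = (x a + X) * (y a + Y) := by ring

lemma numeric_main (p q r α β A B C : ℕ)
    (hpqr : p + q + r = 6)
    (hC : 1 ≤ C) (hαβ : C ≤ α * β)
    (hr0 : r = 0 → q % 2 = 1)
    (hqA : q % 2 = 0 → α ≤ A) (hpB : p % 2 = 0 → β ≤ B)
    (hXsum : C * r ≤ α * B + A * B)
    (hXcs : C * (r * r) ≤ (r * α + A) * B)
    (hYcs : C * (r * r) ≤ A * (r * β + B)) :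
    4 * C ≤ (q * α + A) * (p * β + B) := by
  rcases Nat.eq_zero_or_pos q with hq0 | hq1
  · -- q = 0
    subst hq0
    have hA : α ≤ A := hqA (by norm_num)
    have h1 : α * B ≤ A * B := Nat.mul_le_mul_right B hA
    have h2 : α * β ≤ A * β := Nat.mul_le_mul_right β hA
    have hp6 : p ≤ 6 := by omega
    interval_cases p
    · obtain rfl : r = 6 := by omega
      have hB : β ≤ B := hpB (by norm_num)
      nlinarith [hXcs]
    · obtain rfl : r = 5 := by omega
      nlinarith [hXcs]
    · obtain rfl : r = 4 := by omega
      have hB : β ≤ B := hpB (by norm_num)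
      nlinarith [hXcs]
    · obtain rfl : r = 3 := by omega
      nlinarith [hYcs]
    · obtain rfl : r = 2 := by omega
      nlinarith [hYcs]
    · obtain rfl : r = 1 := by omega
      nlinarith []
    · obtain rfl : r = 0 := by omega
      have := hr0 rfl
      omega
  · rcases Nat.eq_zero_or_pos p with hp0 | hp1
    · -- p = 0, q ≥ 1
      subst hp0
      have hB : β ≤ B := hpB (by norm_num)
      have h1 : A * β ≤ A * B := Nat.mul_le_mul_left A hB
      have h2 : α * β ≤ α * B := Nat.mul_le_mul_left α hB
      have hq6 : q ≤ 6 := by omega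
      interval_cases q
      · obtain rfl : r = 5 := by omega
        nlinarith [hYcs]
      · obtain rfl : r = 4 := by omega
        nlinarith [hYcs]
      · obtain rfl : r = 3 := by omega
        nlinarith [hXcs]
      · obtain rfl : r = 2 := by omega
        nlinarith [hXcs]
      · obtain rfl : r = 1 := by omega
        nlinarith []
      · obtain rfl : r = 0 := by omega
        have := hr0 rfl
        omega
    · -- p,q ≥ 1
      have h2 : (q*p)*(α*β) + (α*B + A*B) ≤ (q * α + A) * (p * β + B) := by
        have e1 : (q*α + A)*(p*β + B) = (q*p)*(α*β) + (q*(α*B) + (p*(A*β) + A*B)) := by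
          ring
        have e2 : α*B ≤ q*(α*B) := Nat.le_mul_of_pos_left _ hq1
        rw [e1]
        have : α*B + A*B ≤ q*(α*B) + (p*(A*β) + A*B) := by
          refine le_trans (Nat.add_le_add e2 (le_refl _)) ?_
          exact Nat.add_le_add_left (Nat.le_add_left _ _) _
        exact Nat.add_le_add_left this _
      have h3 : (q*p)*C ≤ (q*p)*(α*β) := Nat.mul_le_mul_left _ hαβ
      have h4 : 5 ≤ q*p + r := by
        obtain ⟨q', rfl⟩ := Nat.exists_eq_add_of_le hq1
        obtain ⟨p', rfl⟩ := Nat.exists_eq_add_of_le hp1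
        have e : (1+q')*(1+p') + r = (1 + q' + p' + r) + q'*p' := by ring
        have h5' : 1 + q' + p' + r = 5 := by omega
        rw [e, h5']
        exact Nat.le_add_right 5 _
      have h5 : 5*C ≤ (q*p + r)*C := Nat.mul_le_mul_right C h4
      calc 4*C ≤ 5*C := by omega
      _ ≤ (q*p + r)*C := h5
      _ = (q*p)*C + C*r := by ring
      _ ≤ (q*p)*(α*β) + (α*B + A*B) := Nat.add_le_add h3 hXsum
      _ ≤ (q*α + A)*(p*β + B) := h2

section Step

variable {A : Type*} [AddCommGroup A] [DecidableEq A]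

set_option maxHeartbeats 1000000 in
/-- The inductive step: multiplying by one more factor `v * (1 + σ)` multiplies the
product bound by 4. -/
lemma step (c : A →+ ZMod 6) (e : ZMod 6 →+ A) (hce : ∀ z, c (e z) = z)
    (v : R2 A) (hv : Off c v) (C : ℕ) (hC : 1 ≤ C)
    (P0 P1 : A → Prop)
    (hP10 : ∀ x, P1 x → P0 (x - e (c x)))
    (hP0v : ∀ g ∈ v.coeff.support, P0 (Multiplicative.toAdd g))
    (hIH : ∀ z : R2 A, (∀ g ∈ z.coeff.support, P0 (Multiplicative.toAdd g)) → z ≠ 0 →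
      C ≤ wt z * wt (z * v))
    (y : R2 A) (hy : ∀ g ∈ y.coeff.support, P1 (Multiplicative.toAdd g)) (hy0 : y ≠ 0) :
    4 * C ≤ wt y * wt (y * (v * (1 + sig e))) := by
  classical
  set uj := fun j : ZMod 6 => comp c e j y with huj
  set s := ∑ j : ZMod 6, uj j with hs
  set tj := fun j : ZMod 6 => uj j + s with htj
  -- supports of components satisfy P0
  have hcompsupp : ∀ j : ZMod 6, ∀ g ∈ (uj j).coeff.support, P0 (Multiplicative.toAdd g) := by
    intro j g hg
    obtain ⟨hmem, hker⟩ := mem_support_comp c e hce j y g hg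
    have hy' := hy _ hmem
    have harg : Multiplicative.toAdd (g * Multiplicative.ofAdd (e j)) = g.toAdd + e j := rfl
    rw [harg] at hy'
    have := hP10 _ hy'
    rw [map_add, hker, zero_add, hce] at this
    simpa using this
  have hssupp : ∀ g ∈ s.coeff.support, P0 (Multiplicative.toAdd g) := by
    intro g hg
    rw [hs, MonoidAlgebra.coeff_sum] at hg
    have := Finsupp.support_finset_sum (s := Finset.univ) (f := fun j => (uj j).coeff) hg
    obtain ⟨j, _, hj⟩ := Finset.mem_biUnion.mp this
    exact hcompsupp j g hj
  have htsupp : ∀ j : ZMod 6, ∀ g ∈ (tj j).coeff.support, P0 (Multiplicative.toAdd g) := by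
    intro j g hg
    rcases Finset.mem_union.mp (Finsupp.support_add (g₁ := (uj j).coeff) (g₂ := s.coeff) hg) with h1 | h1
    · exact hcompsupp j g h1
    · exact hssupp g h1
  -- weight decomposition of y
  have hwty : wt y = ∑ j : ZMod 6, wt (uj j) := (wt_sum_comp c e y).symm
  -- components of y * w
  have hcompmul : ∀ j : ZMod 6, comp c e j (y * (v * (1 + sig e))) = tj j * v := by
    intro j
    have e1 : y * (v * (1 + sig e)) = y * v + (y * v) * sig e := by ring
    rw [e1, comp_add, comp_mul_off c e hce j y v hv, comp_mul_sig c e hce j (y * v)]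
    have e2 : ∀ k : ZMod 6, comp c e k (y * v) = uj k * v := by
      intro k; exact comp_mul_off c e hce k y v hv
    rw [Finset.sum_congr rfl (fun k _ => e2 k), ← Finset.sum_mul, ← hs, htj]
    ring
  have hwtyw : wt (y * (v * (1 + sig e))) = ∑ j : ZMod 6, wt (tj j * v) := by
    rw [← wt_sum_comp c e (y * (v * (1 + sig e)))]
    exact Finset.sum_congr rfl (fun j _ => by rw [hcompmul j])
  set a := fun j : ZMod 6 => wt (uj j) with ha
  set b := fun j : ZMod 6 => wt (tj j * v) with hb
  rw [hwty, hwtyw]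
  by_cases hs0 : s = 0
  · -- all components sum to zero; at least two nonzero components
    have htu : ∀ j, tj j = uj j := by intro j; rw [htj]; simp [hs0]
    set N := Finset.univ.filter (fun j : ZMod 6 => uj j ≠ 0) with hN
    have hNne : N.Nonempty := by
      by_contra hne
      rw [Finset.not_nonempty_iff_eq_empty] at hne
      apply hy0
      have hz : ∀ j, uj j = 0 := by
        intro j
        by_contra hjj
        have : j ∈ N := by rw [hN]; simp [hjj]
        rw [hne] at this; simp at this
      have := sum_comp c e y
      rw [← this]
      refine Finset.sum_eq_zero (fun j _ => ?_)
      rw [show comp c e j y = uj j from rfl, hz j, zero_mul]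
    obtain ⟨j₀, hj₀⟩ := hNne
    have hN2 : 2 ≤ N.card := by
      by_contra hlt
      push_neg at hlt
      have hcard1 : N.card = 1 := by
        have : 1 ≤ N.card := Finset.card_pos.mpr ⟨j₀, hj₀⟩
        omega
      obtain ⟨j', hj'⟩ := Finset.card_eq_one.mp hcard1
      have huj' : ∀ k, k ≠ j' → uj k = 0 := by
        intro k hk
        by_contra hne
        have : k ∈ N := by rw [hN]; simp [hne]
        rw [hj'] at this
        simp at this
        exact hk this
      have : s = uj j' := by
        rw [hs]
        rw [Finset.sum_eq_single j' (fun k _ hk => huj' k hk) (by intro h; simp at h)]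
      have hj'N : j' ∈ N := by rw [hj']; simp
      rw [hN] at hj'N
      simp at hj'N
      exact hj'N (by rw [← this, hs0])
    -- cauchy-schwarz over N
    have hper : ∀ j ∈ N, C ≤ a j * b j := by
      intro j hj
      rw [hN] at hj
      simp only [Finset.mem_filter] at hj
      simp only [ha, hb]
      rw [htu j]
      exact hIH (uj j) (hcompsupp j) hj.2
    have hcs := cs_nat N a b C hper
    have h4 : 4 * C ≤ N.card * N.card * C :=
      Nat.mul_le_mul_right C (Nat.mul_le_mul hN2 hN2)
    refine le_trans (le_trans h4 hcs) ?_
    exact Nat.mul_le_mul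
      (Finset.sum_le_sum_of_subset (Finset.subset_univ N))
      (Finset.sum_le_sum_of_subset (Finset.subset_univ N))
  · -- s ≠ 0
    set α := wt s with hα
    set β := wt (s * v) with hβ
    have hCαβ : C ≤ α * β := hIH s hssupp hs0
    set NZ := Finset.univ.filter (fun j : ZMod 6 => uj j ≠ 0) with hNZ
    set P := Finset.univ.filter (fun j : ZMod 6 => uj j = 0) with hP
    set Q := NZ.filter (fun j => tj j = 0) with hQ
    set R := NZ.filter (fun j => tj j ≠ 0) with hR
    -- basic per-class facts
    have hPa : ∀ j ∈ P, a j = 0 := by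
      intro j hj; rw [hP] at hj; simp only [Finset.mem_filter] at hj
      simp only [ha]; rw [hj.2]; exact (wt_eq_zero_iff _).mpr rfl
    have hPt : ∀ j ∈ P, tj j = s := by
      intro j hj; rw [hP] at hj; simp only [Finset.mem_filter] at hj
      simp only [htj]; rw [hj.2, zero_add]
    have hPb : ∀ j ∈ P, b j = β := by
      intro j hj; simp only [hb]; rw [hPt j hj, hβ]
    have hQu : ∀ j ∈ Q, uj j = s := by
      intro j hj; rw [hQ] at hj; simp only [Finset.mem_filter] at hj
      exact eq_of_add_eq_zero hj.2
    have hQa : ∀ j ∈ Q, a j = α := by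
      intro j hj; simp only [ha]; rw [hQu j hj]
    have hQb : ∀ j ∈ Q, b j = 0 := by
      intro j hj; rw [hQ] at hj; simp only [Finset.mem_filter] at hj
      simp only [hb]; rw [hj.2, zero_mul]; exact (wt_eq_zero_iff _).mpr rfl
    have hRX : ∀ j ∈ R, C ≤ (α + a j) * b j := by
      intro j hj
      rw [hR] at hj; simp only [Finset.mem_filter] at hj
      have h1 : C ≤ wt (tj j) * b j := hIH (tj j) (htsupp j) hj.2
      have h2 : wt (tj j) ≤ a j + α := by
        simp only [htj, ha]; exact wt_add_le _ _
      refine le_trans h1 (Nat.mul_le_mul_right _ ?_)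
      rw [Nat.add_comm α (a j)]; exact h2
    have hRY : ∀ j ∈ R, C ≤ a j * (β + b j) := by
      intro j hj
      rw [hR] at hj; simp only [Finset.mem_filter, hNZ] at hj
      have hjnz : uj j ≠ 0 := by
        have := hj.1; simp at this; exact this
      have h1 : C ≤ a j * wt (uj j * v) := hIH (uj j) (hcompsupp j) hjnz
      have h2 : uj j * v = tj j * v + s * v := by
        simp only [htj]
        rw [← add_mul]
        congr 1
        calc uj j = uj j + 0 := by rw [add_zero]
        _ = uj j + (s + s) := by rw [addSelf]
        _ = uj j + s + s := by rw [add_assoc]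
      have h3 : wt (uj j * v) ≤ β + b j := by
        rw [h2, Nat.add_comm β (b j)]
        exact wt_add_le _ _
      exact le_trans h1 (Nat.mul_le_mul_left _ h3)
    -- sums over the three classes
    have hNZsplit : ∀ (M : Type) (_ : AddCommMonoid M), True := fun _ _ => trivial
    have hsplitN : ∀ (f : ZMod 6 → ℕ),
        (∑ j : ZMod 6, f j) = (∑ j ∈ P, f j) + ((∑ j ∈ Q, f j) + (∑ j ∈ R, f j)) := by
      intro f
      rw [← Finset.sum_filter_add_sum_filter_not Finset.univ (fun j => uj j = 0) f]
      congr 1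
      rw [← Finset.sum_filter_add_sum_filter_not NZ (fun j => tj j = 0) f]
    have hsplitM : ∀ (f : ZMod 6 → R2 A),
        (∑ j : ZMod 6, f j) = (∑ j ∈ P, f j) + ((∑ j ∈ Q, f j) + (∑ j ∈ R, f j)) := by
      intro f
      rw [← Finset.sum_filter_add_sum_filter_not Finset.univ (fun j => uj j = 0) f]
      congr 1
      rw [← Finset.sum_filter_add_sum_filter_not NZ (fun j => tj j = 0) f]
    set Asum := ∑ j ∈ R, a j with hAs
    set Bsum := ∑ j ∈ R, b j with hBs
    have hsum_a : (∑ j : ZMod 6, a j) = Q.card * α + Asum := by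
      rw [hsplitN a]
      rw [Finset.sum_congr rfl hPa, Finset.sum_const_zero, zero_add]
      rw [Finset.sum_congr rfl hQa, Finset.sum_const, smul_eq_mul]
    have hsum_b : (∑ j : ZMod 6, b j) = P.card * β + Bsum := by
      rw [hsplitN b]
      rw [Finset.sum_congr rfl hPb, Finset.sum_const, smul_eq_mul]
      rw [Finset.sum_congr rfl hQb, Finset.sum_const_zero, zero_add]
    -- decomposition of s itself
    have hPu0 : ∀ j ∈ P, uj j = 0 := fun j hj => by
      rw [hP] at hj; simp only [Finset.mem_filter] at hj; exact hj.2
    have hQt0 : ∀ j ∈ Q, tj j = 0 := fun j hj => by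
      rw [hQ] at hj; simp only [Finset.mem_filter] at hj; exact hj.2
    have hsdecomp : s = Q.card • s + ∑ j ∈ R, uj j := by
      conv_lhs => rw [hs, hsplitM uj]
      rw [Finset.sum_eq_zero hPu0, zero_add, Finset.sum_congr rfl hQu, Finset.sum_const]
    have hqA : Q.card % 2 = 0 → α ≤ Asum := by
      intro hq
      obtain ⟨k, hk⟩ := Nat.even_iff.mpr hq
      have hzero : Q.card • s = 0 := by
        rw [hk, show k + k = 2 * k by ring]
        exact even_smul_zero k s
      have hsum : s = ∑ j ∈ R, uj j := by
        rw [hsdecomp, hzero, zero_add]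
      calc α = wt s := rfl
      _ = wt (∑ j ∈ R, uj j) := by rw [← hsum]
      _ ≤ ∑ j ∈ R, wt (uj j) := wt_sum_le R uj
      _ = Asum := rfl
    have hr0 : R = ∅ → Q.card % 2 = 1 := by
      intro hRe
      rcases Nat.mod_two_eq_zero_or_one (Q.card) with h | h
      · exfalso
        obtain ⟨k, hk⟩ := Nat.even_iff.mpr h
        have hzero : Q.card • s = 0 := by
          rw [hk, show k + k = 2 * k by ring]
          exact even_smul_zero k s
        apply hs0
        rw [hsdecomp, hzero, zero_add, hRe, Finset.sum_empty]
      · exact h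
    -- decomposition of Σ tj
    have htdecomp : s = P.card • s + ∑ j ∈ R, tj j := by
      have h1 : (∑ j : ZMod 6, tj j) = s := by
        simp only [htj]
        rw [Finset.sum_add_distrib, ← hs, Finset.sum_const]
        have hc6 : (Finset.univ : Finset (ZMod 6)).card = 6 := by decide
        rw [hc6, show (6 : ℕ) = 2 * 3 by norm_num, even_smul_zero 3 s, add_zero]
      conv_lhs => rw [← h1, hsplitM tj]
      rw [Finset.sum_congr rfl hPt, Finset.sum_const]
      congr 1
      rw [Finset.sum_eq_zero hQt0, zero_add]
    have hpB : P.card % 2 = 0 → β ≤ Bsum := by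
      intro hp
      obtain ⟨k, hk⟩ := Nat.even_iff.mpr hp
      have hzero : P.card • s = 0 := by
        rw [hk, show k + k = 2 * k by ring]
        exact even_smul_zero k s
      have hsum : s = ∑ j ∈ R, tj j := by
        rw [htdecomp, hzero, zero_add]
      calc β = wt (s * v) := rfl
      _ = wt ((∑ j ∈ R, tj j) * v) := by rw [← hsum]
      _ = wt (∑ j ∈ R, tj j * v) := by rw [Finset.sum_mul]
      _ ≤ ∑ j ∈ R, wt (tj j * v) := wt_sum_le R _
      _ = Bsum := rfl
    -- Cauchy–Schwarz style bounds
    have hXcs : C * (R.card * R.card) ≤ (R.card * α + Asum) * Bsum := by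
      have h1 := cs_nat R (fun j => α + a j) b C hRX
      have h2 : (∑ j ∈ R, (α + a j)) = R.card * α + Asum := by
        rw [Finset.sum_add_distrib, Finset.sum_const, smul_eq_mul]
      rw [h2] at h1
      calc C * (R.card * R.card) = R.card * R.card * C := by ring
      _ ≤ _ := h1
    have hYcs : C * (R.card * R.card) ≤ Asum * (R.card * β + Bsum) := by
      have h1 := cs_nat R a (fun j => β + b j) C hRY
      have h2 : (∑ j ∈ R, (β + b j)) = R.card * β + Bsum := by
        rw [Finset.sum_add_distrib, Finset.sum_const, smul_eq_mul]
      rw [h2] at h1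
      calc C * (R.card * R.card) = R.card * R.card * C := by ring
      _ ≤ _ := h1
    have hXsum : C * R.card ≤ α * Bsum + Asum * Bsum := by
      have h1 : R.card • C ≤ ∑ j ∈ R, (α + a j) * b j :=
        Finset.card_nsmul_le_sum R _ C hRX
      have h2 : (∑ j ∈ R, (α + a j) * b j) = α * Bsum + ∑ j ∈ R, a j * b j := by
        rw [hBs, Finset.mul_sum, ← Finset.sum_add_distrib]
        exact Finset.sum_congr rfl (fun j _ => by ring)
      have h3 : (∑ j ∈ R, a j * b j) ≤ Asum * Bsum := diag_sum_le R a b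
      calc C * R.card = R.card • C := by rw [smul_eq_mul]; ring
      _ ≤ α * Bsum + ∑ j ∈ R, a j * b j := by rw [← h2]; exact h1
      _ ≤ α * Bsum + Asum * Bsum := Nat.add_le_add_left h3 _
    have hpqr : P.card + Q.card + R.card = 6 := by
      have h1 : Q.card + R.card = NZ.card := by
        rw [hQ, hR]
        exact Finset.card_filter_add_card_filter_not (fun j => tj j = 0)
      have h2 : P.card + NZ.card = 6 := by
        have := Finset.card_filter_add_card_filter_not
          (s := (Finset.univ : Finset (ZMod 6))) (fun j => uj j = 0)
        have hc6 : (Finset.univ : Finset (ZMod 6)).card = 6 := by decide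
        rw [hc6] at this
        exact this
      omega
    have := numeric_main P.card Q.card R.card α β Asum Bsum C hpqr hC hCαβ
      (fun h => hr0 (Finset.card_eq_zero.mp h)) hqA hpB hXsum hXcs hYcs
    rw [hsum_a, hsum_b]
    exact this

lemma ofA_mul_sig (e : ZMod 6 →+ A) (k : ZMod 6) : ofA (e k) * sig e = sig e := by
  rw [sig, Finset.mul_sum]
  rw [Finset.sum_congr rfl (fun l _ => by rw [ofA_mul, ← map_add])]
  exact Fintype.sum_equiv (Equiv.addLeft k) _ _ (fun l => rfl)

lemma sig_sq (e : ZMod 6 →+ A) : (1 + sig e) * (1 + sig e) = 1 := by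
  have hmul : ∀ k : ZMod 6, ofA (e k) * sig e = sig e := ofA_mul_sig e
  have hsq : sig e * sig e = 0 := by
    nth_rewrite 1 [sig]
    rw [Finset.sum_mul]
    rw [Finset.sum_congr rfl (fun k _ => hmul k)]
    rw [Finset.sum_const]
    have hc6 : (Finset.univ : Finset (ZMod 6)).card = 6 := by decide
    have h := even_smul_zero 3 (sig e)
    rw [show 2*3 = 6 from rfl] at h
    rw [hc6]
    exact h
  calc (1 + sig e) * (1 + sig e) = 1 + (sig e + sig e) + sig e * sig e := by ring
  _ = 1 := by rw [addSelf, add_zero, hsq, add_zero]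

end Step

section Concrete

variable {m : ℕ}

abbrev Am (m : ℕ) : Type := (Fin m → ZMod 6) × ZMod 2

/-- the `i`-th coordinate map. -/
def ci (i : Fin m) : Am m →+ ZMod 6 :=
  (Pi.evalAddMonoidHom (fun _ => ZMod 6) i).comp (AddMonoidHom.fst _ _)

/-- the `i`-th coordinate section. -/
def ei (i : Fin m) : ZMod 6 →+ Am m :=
  (AddMonoidHom.inl _ _).comp (AddMonoidHom.single (fun _ => ZMod 6) i)

lemma hcei (i : Fin m) : ∀ z, ci i (ei i z) = z := by
  intro z
  simp [ci, ei]

lemma ei_apply (i : Fin m) (z : ZMod 6) : ei i z = (Pi.single i z, 0) := rfl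

def ch : Am m →+ ZMod 2 := AddMonoidHom.snd _ _

def eh : ZMod 2 →+ Am m := AddMonoidHom.inr _ _

lemma hceh : ∀ z, ch (m := m) (eh z) = z := by intro z; simp [ch, eh]

/-- the product of `(1 + σᵢ)` over `i ∈ S`. -/
def uS (S : Finset (Fin m)) : R2 (Am m) := ∏ i ∈ S, (1 + sig (ei i))

lemma uS_supp (S : Finset (Fin m)) :
    ∀ g ∈ (uS S).coeff.support,
      (Multiplicative.toAdd g).2 = 0 ∧ ∀ j ∉ S, (Multiplicative.toAdd g).1 j = 0 := by
  classical
  induction S using Finset.induction_on with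
  | empty =>
    intro g hg
    rw [uS, Finset.prod_empty] at hg
    have : g ∈ (MonoidAlgebra.single (1 : Multiplicative (Am m)) (1 : ZMod 2)).coeff.support := hg
    rw [MonoidAlgebra.coeff_single, Finsupp.support_single_ne_zero _ one_ne_zero] at this
    simp only [Finset.mem_singleton] at this
    subst this
    constructor <;> simp
  | @insert i S hiS ih =>
    intro g hg
    rw [uS, Finset.prod_insert hiS] at hg
    have := MonoidAlgebra.support_coeff_mul_subset _ _ hg
    obtain ⟨g₁, hg₁, g₂, hg₂, rfl⟩ := Finset.mem_mul.mp this
    -- g₁ is in the support of 1 + sig (ei i)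
    have hg1' : ∃ k : ZMod 6, g₁ = Multiplicative.ofAdd (ei i k) := by
      rcases Finset.mem_union.mp (Finsupp.support_add (g₁ := (1 : R2 (Am m)).coeff) (g₂ := (sig (ei i)).coeff) hg₁) with h1 | h1
      · have : g₁ ∈ (MonoidAlgebra.single (1 : Multiplicative (Am m)) (1 : ZMod 2)).coeff.support := h1
        rw [MonoidAlgebra.coeff_single, Finsupp.support_single_ne_zero _ one_ne_zero] at this
        simp only [Finset.mem_singleton] at this
        exact ⟨0, by rw [this, map_zero]; rfl⟩
      · rw [sig, MonoidAlgebra.coeff_sum] at h1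
        have := Finsupp.support_finset_sum (s := Finset.univ)
          (f := fun k => (ofA (ei i k)).coeff) h1
        obtain ⟨k, _, hk⟩ := Finset.mem_biUnion.mp this
        have := Finsupp.support_single_subset (a := Multiplicative.ofAdd (ei i k)) (b := (1 : ZMod 2)) hk
        simp only [Finset.mem_singleton] at this
        exact ⟨k, this⟩
    obtain ⟨k, rfl⟩ := hg1'
    obtain ⟨h2a, h2b⟩ := ih g₂ hg₂
    have htadd : Multiplicative.toAdd (Multiplicative.ofAdd (ei i k) * g₂)
        = ei i k + g₂.toAdd := rfl
    rw [htadd]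
    constructor
    · rw [ei_apply]
      simp only [Prod.snd_add]
      rw [h2a]; rfl
    · intro j hj
      have hji : j ≠ i := fun h => hj (by rw [h]; exact Finset.mem_insert_self i S)
      have hjS : j ∉ S := fun h => hj (Finset.mem_insert_of_mem h)
      rw [ei_apply]
      simp only [Prod.fst_add, Pi.add_apply]
      rw [Pi.single_eq_of_ne hji, h2b j hjS, add_zero]


/-- support predicate: only coordinates in `S` are used, and no `h`-component. -/
def PS (S : Finset (Fin m)) (x : Am m) : Prop := x.2 = 0 ∧ ∀ j ∉ S, x.1 j = 0

lemma key (S : Finset (Fin m)) :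
    ∀ y : R2 (Am m), (∀ g ∈ y.coeff.support, PS S (Multiplicative.toAdd g)) → y ≠ 0 →
      4 ^ S.card ≤ wt y * wt (y * uS S) := by
  classical
  induction S using Finset.induction_on with
  | empty =>
    intro y _ hy0
    rw [uS, Finset.prod_empty, mul_one, Finset.card_empty, pow_zero]
    exact Nat.one_le_iff_ne_zero.mpr
      (Nat.mul_ne_zero (Nat.one_le_iff_ne_zero.mp (one_le_wt hy0))
        (Nat.one_le_iff_ne_zero.mp (one_le_wt hy0)))
  | @insert i S hiS ih =>
    intro y hy hy0
    have hprod : uS (insert i S) = uS S * (1 + sig (ei i)) := by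
      rw [uS, Finset.prod_insert hiS, mul_comm]
      rfl
    rw [hprod, Finset.card_insert_of_notMem hiS, pow_succ, mul_comm (4 ^ S.card) 4]
    refine step (ci i) (ei i) (hcei i) (uS S) ?_ (4 ^ S.card) (Nat.one_le_iff_ne_zero.mpr
      (pow_ne_zero _ (by norm_num))) (PS S) (PS (insert i S)) ?_ ?_ ?_ y hy hy0
    · -- uS S is Off (ci i)
      intro g hg
      have := (uS_supp S g hg).2 i hiS
      simpa [ci] using this
    · -- hP10
      intro x hx
      obtain ⟨hx2, hx1⟩ := hx
      constructor
      · rw [ei_apply]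
        simp only [Prod.snd_sub]
        rw [hx2]; rfl
      · intro j hj
        rw [ei_apply]
        simp only [Prod.fst_sub, Pi.sub_apply]
        by_cases hji : j = i
        · subst hji
          rw [Pi.single_eq_same]
          simp [ci]
        · rw [Pi.single_eq_of_ne hji, sub_zero]
          exact hx1 j (fun h => (Finset.mem_insert.mp h).elim hji hj)
    · -- support of uS S satisfies PS S
      intro g hg
      obtain ⟨h1, h2⟩ := uS_supp S g hg
      exact ⟨h1, h2⟩
    · -- induction hypothesis
      intro z hz hz0
      exact ih z hz hz0


lemma uS_mul_uS (S : Finset (Fin m)) : uS S * uS S = 1 := by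
  rw [uS, ← Finset.prod_mul_distrib]
  rw [Finset.prod_congr rfl (fun i _ => sig_sq (ei i))]
  exact Finset.prod_const_one

lemma agen_pow (i : Fin m) (k : ℕ) :
    agen m i ^ k = Multiplicative.ofAdd (ei i (k : ZMod 6)) := by
  induction k with
  | zero => rw [pow_zero, Nat.cast_zero, map_zero]; rfl
  | succ k ihk =>
    rw [pow_succ, ihk, agen]
    show Multiplicative.ofAdd _ * Multiplicative.ofAdd _ = _
    rw [← ofAdd_add]
    congr 1
    rw [show ((Pi.single i 1 : Fin m → ZMod 6), (0 : ZMod 2)) = ei i 1 from rfl]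
    rw [← map_add, Nat.cast_succ]

lemma of_agen_pow (i : Fin m) (k : ℕ) :
    (MonoidAlgebra.of (ZMod 2) (Gp m) (agen m i)) ^ k = ofA (ei i (k : ZMod 6)) := by
  rw [← map_pow, agen_pow]
  rfl

lemma zmod6_univ : (Finset.univ : Finset (ZMod 6)) = {0, 1, 2, 3, 4, 5} := by decide

lemma sig_enum (i : Fin m) :
    sig (ei i) = 1 + (ofA (ei i 1) + ofA (ei i 2) + ofA (ei i 3) + ofA (ei i 4)
      + ofA (ei i 5)) := by
  rw [sig, zmod6_univ]
  rw [show ({0, 1, 2, 3, 4, 5} : Finset (ZMod 6))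
    = insert 0 (insert 1 (insert 2 (insert 3 (insert 4 ({5} : Finset (ZMod 6)))))) from rfl]
  rw [Finset.sum_insert (by decide), Finset.sum_insert (by decide),
    Finset.sum_insert (by decide), Finset.sum_insert (by decide),
    Finset.sum_insert (by decide), Finset.sum_singleton]
  rw [map_zero (ei i), ofA_zero]
  ring

lemma um_factor (i : Fin m) :
    (MonoidAlgebra.of (ZMod 2) (Gp m) (agen m i)
      + MonoidAlgebra.of (ZMod 2) (Gp m) (agen m i) ^ 2
      + MonoidAlgebra.of (ZMod 2) (Gp m) (agen m i) ^ 3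
      + MonoidAlgebra.of (ZMod 2) (Gp m) (agen m i) ^ 4
      + MonoidAlgebra.of (ZMod 2) (Gp m) (agen m i) ^ 5) = 1 + sig (ei i) := by
  have h1 : MonoidAlgebra.of (ZMod 2) (Gp m) (agen m i) = ofA (ei i 1) := by
    rw [← pow_one (MonoidAlgebra.of (ZMod 2) (Gp m) (agen m i)), of_agen_pow]
    norm_num
  rw [of_agen_pow i 2, of_agen_pow i 3, of_agen_pow i 4, of_agen_pow i 5, h1, sig_enum]
  have e2 : ((2 : ℕ) : ZMod 6) = (2 : ZMod 6) := by norm_num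
  have e3 : ((3 : ℕ) : ZMod 6) = (3 : ZMod 6) := by norm_num
  have e4 : ((4 : ℕ) : ZMod 6) = (4 : ZMod 6) := by norm_num
  have e5 : ((5 : ℕ) : ZMod 6) = (5 : ZMod 6) := by norm_num
  rw [e2, e3, e4, e5]
  calc ofA (ei i 1) + ofA (ei i 2) + ofA (ei i 3) + ofA (ei i 4) + ofA (ei i 5)
      = 0 + (ofA (ei i 1) + ofA (ei i 2) + ofA (ei i 3) + ofA (ei i 4) + ofA (ei i 5)) := by
        rw [zero_add]
  _ = (1 + 1) + (ofA (ei i 1) + ofA (ei i 2) + ofA (ei i 3) + ofA (ei i 4) + ofA (ei i 5)) := by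
        rw [addSelf]
  _ = 1 + (1 + (ofA (ei i 1) + ofA (ei i 2) + ofA (ei i 3) + ofA (ei i 4) + ofA (ei i 5))) := by
        ring

lemma um_eq_uS : um m = uS Finset.univ := by
  rw [um, uS]
  exact Finset.prod_congr rfl (fun i _ => um_factor i)


lemma um_off : Off (ch (m := m)) (um m) := by
  intro g hg
  rw [um_eq_uS] at hg
  exact (uS_supp Finset.univ g hg).1

lemma um_mul_um : um m * um m = 1 := by
  rw [um_eq_uS]; exact uS_mul_uS Finset.univ

lemma of_hgen : MonoidAlgebra.of (ZMod 2) (Gp m) (hgen m) = ofA (eh 1) := rfl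

lemma zmod2_sum {M : Type*} [AddCommMonoid M] (f : ZMod 2 → M) :
    (∑ j : ZMod 2, f j) = f 0 + f 1 := by
  rw [show (Finset.univ : Finset (ZMod 2)) = {0, 1} from by decide]
  rw [Finset.sum_insert (by decide), Finset.sum_singleton]

lemma hdecomp (z : R2 (Am m)) :
    z = comp ch eh 0 z + comp ch eh 1 z * ofA (eh 1) := by
  conv_lhs => rw [← sum_comp ch eh z]
  rw [zmod2_sum (fun j => comp ch eh j z * ofA (eh j))]
  rw [map_zero (eh (m := m)), ofA_zero, mul_one]

lemma wt_decomp2 (z : R2 (Am m)) :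
    wt z = wt (comp ch eh 0 z) + wt (comp ch eh 1 z) := by
  conv_lhs => rw [← wt_sum_comp ch eh z]
  exact zmod2_sum (fun j => wt (comp ch eh j z))

/-- Every multiple of `uu m` is in the code. -/
lemma mul_mem_code (x : MonoidAlgebra (ZMod 2) (Gp m)) : x * uu m ∈ codeGen (uu m) := by
  induction x using MonoidAlgebra.induction_linear with
  | zero =>
    rw [show ((0 : MonoidAlgebra (ZMod 2) (Gp m)) * uu m) = 0 from zero_mul _]
    exact Submodule.zero_mem _
  | add f g hf hg =>
    rw [add_mul]
    exact Submodule.add_mem _ hf hg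
  | single g r =>
    have h1 : (MonoidAlgebra.single g r : MonoidAlgebra (ZMod 2) (Gp m))
        = r • MonoidAlgebra.of (ZMod 2) (Gp m) g := by
      rw [MonoidAlgebra.of_apply, MonoidAlgebra.smul_single', mul_one]
    rw [h1, smul_mul_assoc]
    exact Submodule.smul_mem _ r (Submodule.subset_span ⟨g, rfl⟩)

lemma exists_mul_of_mem_code {cw : MonoidAlgebra (ZMod 2) (Gp m)}
    (h : cw ∈ codeGen (uu m)) : ∃ x, cw = x * uu m := by
  refine Submodule.span_induction ?_ ?_ ?_ ?_ h
  · rintro x ⟨g, rfl⟩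
    exact ⟨MonoidAlgebra.of (ZMod 2) (Gp m) g, rfl⟩
  · exact ⟨0, (zero_mul _).symm⟩
  · rintro x y _ _ ⟨z1, rfl⟩ ⟨z2, rfl⟩
    exact ⟨z1 + z2, (add_mul _ _ _).symm⟩
  · rintro r x _ ⟨z, rfl⟩
    exact ⟨r • z, (smul_mul_assoc _ _ _).symm⟩

/-- Lower bound: every nonzero codeword has weight at least `2^(m+1)`. -/
lemma lower_bound {cw : MonoidAlgebra (ZMod 2) (Gp m)}
    (hmem : cw ∈ codeGen (uu m)) (hne : cw ≠ 0) : 2 ^ (m + 1) ≤ wt cw := by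
  obtain ⟨x, rfl⟩ := exists_mul_of_mem_code hmem
  set x0 := comp ch eh 0 x with hx0
  set x1 := comp ch eh 1 x with hx1
  have hcw : x * uu m = x + (x * um m) * ofA (eh 1) := by
    rw [uu, of_hgen]
    ring
  set y := x0 + x1 * um m with hy
  have hc0 : comp ch eh 0 (x * uu m) = y := by
    rw [hcw, comp_add, comp_mul_e ch eh hceh, comp_mul_off ch eh hceh _ _ _ um_off]
    rw [show (0 : ZMod 2) - 1 = 1 from by decide]
  have hc1 : comp ch eh 1 (x * uu m) = y * um m := by
    rw [hcw, comp_add, comp_mul_e ch eh hceh, comp_mul_off ch eh hceh _ _ _ um_off]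
    rw [show (1 : ZMod 2) - 1 = 0 from by decide]
    rw [hy, add_mul, mul_assoc, um_mul_um, mul_one, add_comm]
  have hyne : y ≠ 0 := by
    intro h0
    apply hne
    rw [hdecomp (x * uu m), hc0, hc1, h0, zero_mul, zero_mul, zero_add]
  have hwt : wt (x * uu m) = wt y + wt (y * um m) := by
    rw [wt_decomp2 (x * uu m), hc0, hc1]
  have hysupp : ∀ g ∈ y.coeff.support, PS Finset.univ (Multiplicative.toAdd g) := by
    intro g hg
    refine ⟨?_, fun j hj => absurd (Finset.mem_univ j) hj⟩
    have hoff : Off (ch (m := m)) y := by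
      rw [hy]
      exact Off_add _ (Off_comp ch eh hceh 0 x)
        (Off_mul _ (Off_comp ch eh hceh 1 x) um_off)
    exact hoff g hg
  have hkey := key Finset.univ y hysupp hyne
  rw [um_eq_uS] at hwt
  rw [Finset.card_univ, Fintype.card_fin] at hkey
  rw [hwt]
  have h4 : (2 ^ m) * (2 ^ m) = 4 ^ m := by
    rw [← mul_pow]
    norm_num
  rw [pow_succ, mul_comm (2 ^ m) 2]
  exact sqrt_trick (by rw [h4]; exact hkey)

/-- The low-weight codeword. -/
def yb (m : ℕ) : R2 (Am m) := ∏ i : Fin m, (1 + ofA (ei i 3))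

lemma yb_mul_um : yb m * um m = yb m := by
  rw [um_eq_uS, yb, uS, ← Finset.prod_mul_distrib]
  refine Finset.prod_congr rfl (fun i _ => ?_)
  calc (1 + ofA (ei i 3)) * (1 + sig (ei i))
      = 1 + ofA (ei i 3) + (sig (ei i) + ofA (ei i 3) * sig (ei i)) := by ring
  _ = 1 + ofA (ei i 3) := by
      rw [ofA_mul_sig, addSelf, add_zero]

lemma yb_wt_supp (S : Finset (Fin m)) :
    wt (∏ i ∈ S, (1 + ofA (ei i 3))) = 2 ^ S.card ∧
    ∀ g ∈ (∏ i ∈ S, (1 + ofA (ei i 3))).coeff.support,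
      (Multiplicative.toAdd g).2 = 0 ∧ ∀ j ∉ S, (Multiplicative.toAdd g).1 j = 0 := by
  classical
  induction S using Finset.induction_on with
  | empty =>
    constructor
    · rw [Finset.prod_empty, Finset.card_empty, pow_zero]
      rw [wt, show (1 : R2 (Am m)) = MonoidAlgebra.single 1 1 from rfl,
        MonoidAlgebra.coeff_single, Finsupp.support_single_ne_zero _ one_ne_zero]
      rfl
    · intro g hg
      rw [Finset.prod_empty] at hg
      have : g ∈ (MonoidAlgebra.single (1 : Multiplicative (Am m)) (1 : ZMod 2)).coeff.support := hg
      rw [MonoidAlgebra.coeff_single, Finsupp.support_single_ne_zero _ one_ne_zero] at this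
      simp only [Finset.mem_singleton] at this
      subst this
      exact ⟨rfl, fun j _ => rfl⟩
  | @insert i S hiS ih =>
    obtain ⟨ihw, ihs⟩ := ih
    set z := ∏ i ∈ S, (1 + ofA (ei i 3)) with hz
    have hzi : ∀ g ∈ z.coeff.support, (Multiplicative.toAdd g).1 i = 0 := by
      intro g hg
      exact (ihs g hg).2 i hiS
    have hprod : (∏ j ∈ insert i S, (1 + ofA (ei j 3))) = z + z * ofA (ei i 3) := by
      rw [Finset.prod_insert hiS, ← hz, mul_comm, mul_add, mul_one, mul_comm]
    have hdisj : Disjoint z.coeff.support (z * ofA (ei i 3)).coeff.support := by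
      rw [Finset.disjoint_left]
      intro g hg hg2
      have h1 : (Multiplicative.toAdd g).1 i = 0 := hzi g hg
      have h2 : (Multiplicative.toAdd g).1 i = 3 := by
        rw [Finsupp.mem_support_iff, mul_ofA_apply] at hg2
        have hmem : (g * (Multiplicative.ofAdd (ei i 3))⁻¹) ∈ z.coeff.support :=
          Finsupp.mem_support_iff.mpr hg2
        have h3 := hzi _ hmem
        have harg : Multiplicative.toAdd (g * (Multiplicative.ofAdd (ei i 3))⁻¹)
            = g.toAdd - ei i 3 := by
          rw [toAdd_mul, toAdd_inv, toAdd_ofAdd, sub_eq_add_neg]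
        rw [harg] at h3
        rw [ei_apply] at h3
        simp only [Prod.fst_sub, Pi.sub_apply, Pi.single_eq_same] at h3
        have := sub_eq_zero.mp h3
        exact this
      rw [h1] at h2
      exact absurd h2.symm (by decide)
    constructor
    · rw [hprod, wt_add_of_disjoint hdisj, wt_mul_ofA, ihw,
        Finset.card_insert_of_notMem hiS, pow_succ]
      ring
    · intro g hg
      rw [hprod] at hg
      rcases Finset.mem_union.mp (Finsupp.support_add (g₁ := z.coeff) (g₂ := (z * ofA (ei i 3)).coeff) hg) with h1 | h1
      · obtain ⟨ha, hb⟩ := ihs g h1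
        exact ⟨ha, fun j hj => hb j (fun hjs => hj (Finset.mem_insert_of_mem hjs))⟩
      · rw [Finsupp.mem_support_iff, mul_ofA_apply] at h1
        have hmem : (g * (Multiplicative.ofAdd (ei i 3))⁻¹) ∈ z.coeff.support :=
          Finsupp.mem_support_iff.mpr h1
        obtain ⟨ha, hb⟩ := ihs _ hmem
        have harg : Multiplicative.toAdd (g * (Multiplicative.ofAdd (ei i 3))⁻¹)
            = g.toAdd - ei i 3 := by
          rw [toAdd_mul, toAdd_inv, toAdd_ofAdd, sub_eq_add_neg]
        rw [harg] at ha hb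
        constructor
        · rw [ei_apply] at ha
          simp only [Prod.snd_sub] at ha
          have : (Multiplicative.toAdd g).2 - 0 = 0 := ha
          rwa [sub_zero] at this
        · intro j hj
          have hji : j ≠ i := fun h => hj (by rw [h]; exact Finset.mem_insert_self i S)
          have hjS : j ∉ S := fun h => hj (Finset.mem_insert_of_mem h)
          have := hb j hjS
          rw [ei_apply] at this
          simp only [Prod.fst_sub, Pi.sub_apply] at this
          rwa [Pi.single_eq_of_ne hji, sub_zero] at this

lemma wt_upper : wt (yb m * uu m) = 2 ^ (m + 1) := by
  have hw : yb m * uu m = yb m + yb m * ofA (eh 1) := by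
    rw [uu, of_hgen, mul_add, mul_one]
    congr 1
    rw [show yb m * (ofA (eh 1) * um m) = (yb m * um m) * ofA (eh 1) from by ring, yb_mul_um]
  obtain ⟨hwt, hsupp⟩ := yb_wt_supp (m := m) Finset.univ
  have hyb : wt (yb m) = 2 ^ m := by
    rw [yb]
    rw [show (∏ i : Fin m, (1 + ofA (ei i 3))) = ∏ i ∈ Finset.univ, (1 + ofA (ei i 3)) from rfl]
    rw [hwt, Finset.card_univ, Fintype.card_fin]
  have hdisj : Disjoint (yb m).coeff.support (yb m * ofA (eh 1)).coeff.support := by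
    rw [Finset.disjoint_left]
    intro g hg hg2
    have h1 : (Multiplicative.toAdd g).2 = 0 := (hsupp g hg).1
    rw [Finsupp.mem_support_iff, mul_ofA_apply] at hg2
    have hmem : (g * (Multiplicative.ofAdd (eh 1))⁻¹) ∈ (yb m).coeff.support :=
      Finsupp.mem_support_iff.mpr hg2
    have h2 := (hsupp _ hmem).1
    have harg : Multiplicative.toAdd (g * (Multiplicative.ofAdd (eh (m := m) 1))⁻¹)
        = g.toAdd - eh 1 := by
      rw [toAdd_mul, toAdd_inv, toAdd_ofAdd, sub_eq_add_neg]
    rw [harg] at h2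
    have h3 : (Multiplicative.toAdd g).2 - (1 : ZMod 2) = 0 := h2
    rw [h1] at h3
    exact absurd h3 (by decide)
  rw [hw, wt_add_of_disjoint hdisj, wt_mul_ofA, hyb, pow_succ]
  ring


theorem distance_of_C6m_C2_code (m : ℕ) (hm : 1 ≤ m) :
    minDist (uu m) = 2 ^ (m + 1) := by
  have hmem : (2 : ℕ) ^ (m + 1) ∈ {n | ∃ x ∈ codeGen (uu m), x ≠ 0 ∧ wt x = n} := by
    refine ⟨yb m * uu m, mul_mem_code (yb m), ?_, wt_upper⟩
    intro h0
    have h2 := wt_upper (m := m)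
    rw [h0] at h2
    simp [wt] at h2
    have h3 : (0:ℕ) < 2 ^ (m+1) := Nat.pow_pos (by norm_num)
    omega
  rw [minDist]
  refine le_antisymm (Nat.sInf_le hmem) ?_
  refine le_csInf ⟨_, hmem⟩ ?_
  rintro n ⟨x, hx, hne, rfl⟩
  exact lower_bound hx hne

end Concrete

end
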